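/- Let Y be a closed subspace of a Banach space X. Then for every nonempty compact subset F of X, rad_{B_{Y⊥⊥}}(F) = rad_{B_Y}(F), i.e., the restricted Chebyshev radius of F with respect to the unit ball of Y⊥⊥ in X** equals its restricted Chebyshev radius with respect to the unit ball of Y in X. -/

import Mathlib

open Metric Set Pointwise

/-- `r(x,B) = sup_{b ∈ B} ‖x - b‖`. -/
noncomputable def chebR {X : Type*} [NormedAddCommGroup X] (x : X) (B : Set X) : ℝ :=
  ⨆ b : B, ‖x - (b : X)‖

/-- `rad_V(B) = inf_{v ∈ V} r(v,B)`, the restricted Chebyshev radius. -/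
noncomputable def chebRad {X : Type*} [NormedAddCommGroup X] (V B : Set X) : ℝ :=
  ⨅ v : V, chebR (v : X) B

/-- `cent_V(B)`, the set of restricted Chebyshev centers of `B` w.r.t. `V`. -/
noncomputable def chebCent {X : Type*} [NormedAddCommGroup X] (V B : Set X) : Set X :=
  {v ∈ V | chebR v B ≤ chebRad V B}

/-- `cent_V(B,δ) = {v ∈ V : r(v,B) ≤ rad_V(B) + δ}`. -/
noncomputable def chebCentA {X : Type*} [NormedAddCommGroup X] (V B : Set X) (δ : ℝ) : Set X :=
  {v ∈ V | chebR v B ≤ chebRad V B + δ}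

open NormedSpace in
/-- The double annihilator `Y⊥⊥` of `Y`, as a subset of the bidual `X**`. -/
def biann {X : Type*} [NormedAddCommGroup X] [NormedSpace ℝ X] (Y : Submodule ℝ X) :
    Set (StrongDual ℝ (StrongDual ℝ X)) :=
  {Φ | ∀ f : StrongDual ℝ X, (∀ y ∈ Y, f y = 0) → Φ f = 0}

section helpers

variable {X : Type*} [NormedAddCommGroup X]

lemma chebR_nonneg (x : X) (B : Set X) : 0 ≤ chebR x B :=
  Real.iSup_nonneg fun _ => norm_nonneg _

lemma chebR_le {x : X} {B : Set X} (hB : B.Nonempty) {r : ℝ}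
    (h : ∀ b ∈ B, ‖x - b‖ ≤ r) : chebR x B ≤ r := by
  haveI : Nonempty B := hB.to_subtype
  exact ciSup_le fun b => h b b.2

lemma bddAbove_chebR (x : X) {B : Set X} {M : ℝ} (hM : ∀ b ∈ B, ‖b‖ ≤ M) :
    BddAbove (Set.range fun b : B => ‖x - (b : X)‖) := by
  refine ⟨‖x‖ + M, ?_⟩
  rintro _ ⟨b, rfl⟩
  calc ‖x - (b : X)‖ ≤ ‖x‖ + ‖(b : X)‖ := norm_sub_le _ _
    _ ≤ ‖x‖ + M := by linarith [hM b b.2]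

lemma le_chebR {x : X} {B : Set X}
    (hbd : BddAbove (Set.range fun b : B => ‖x - (b : X)‖)) {b : X} (hb : b ∈ B) :
    ‖x - b‖ ≤ chebR x B :=
  le_ciSup hbd ⟨b, hb⟩

lemma chebRad_le {V B : Set X} {v : X} (hv : v ∈ V) : chebRad V B ≤ chebR v B := by
  unfold chebRad
  have hbdd : BddBelow (Set.range fun w : V => chebR (w : X) B) := by
    refine ⟨0, ?_⟩
    rintro _ ⟨w, rfl⟩
    exact chebR_nonneg _ _
  exact ciInf_le hbdd ⟨v, hv⟩

lemma chebRad_nonneg {V : Set X} (hV : V.Nonempty) (B : Set X) : 0 ≤ chebRad V B := by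
  haveI : Nonempty V := hV.to_subtype
  unfold chebRad
  exact le_ciInf fun v => chebR_nonneg _ _

end helpers

open NormedSpace in
set_option maxHeartbeats 1000000 in
/-- The key finite-index lemma, a weak form of the principle of local
reflexivity obtained by one Hahn–Banach separation in `X × (ι → X)`. -/
lemma key_lemma {X : Type*} [NormedAddCommGroup X] [NormedSpace ℝ X] (Y : Submodule ℝ X)
    {ι : Type*} [Fintype ι] [DecidableEq ι] (f : ι → X)
    (Φ : StrongDual ℝ (StrongDual ℝ X)) (hΦY : Φ ∈ biann Y) (hΦ : ‖Φ‖ ≤ 1)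
    {r ε : ℝ} (hε : 0 < ε) (hr : 0 ≤ r)
    (hd : ∀ i, ‖Φ - inclusionInDoubleDual ℝ X (f i)‖ ≤ r) :
    ∃ y ∈ Y, ‖y‖ ≤ 1 + ε ∧ ∀ i, ‖y - f i‖ ≤ r + ε := by
  by_cases hgood : ∃ y ∈ (Y : Set X), ‖y‖ < 1 + ε ∧ ∀ i, ‖y - f i‖ < r + ε
  · obtain ⟨y, hy, h1, h2⟩ := hgood
    exact ⟨y, hy, h1.le, fun i => (h2 i).le⟩
  -- Separation setup in `W = X × (ι → X)`
  exfalso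
  set S : Set (X × (ι → X)) := (ball (0 : X) (1 + ε)) ×ˢ (Set.pi Set.univ fun _ : ι => ball (0 : X) (r + ε))
    with hS_def
  set C : Set (X × (ι → X)) := (fun y : X => (y, fun i => y - f i)) '' (Y : Set X) with hC_def
  have hSopen : IsOpen S := (isOpen_ball).prod (isOpen_set_pi Set.finite_univ
    fun _ _ => isOpen_ball)
  have hSconv : Convex ℝ S := (convex_ball _ _).prod (convex_pi fun _ _ => convex_ball _ _)
  have hCconv : Convex ℝ C := by
    rintro p ⟨y₁, hy₁, rfl⟩ q ⟨y₂, hy₂, rfl⟩ a b ha hb hab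
    refine ⟨a • y₁ + b • y₂, Y.add_mem (Y.smul_mem a hy₁) (Y.smul_mem b hy₂), ?_⟩
    refine Prod.ext rfl ?_
    funext i
    show a • y₁ + b • y₂ - f i = a • (y₁ - f i) + b • (y₂ - f i)
    rw [smul_sub, smul_sub]
    have : a • f i + b • f i = f i := by rw [← add_smul, hab, one_smul]
    calc a • y₁ + b • y₂ - f i = a • y₁ + b • y₂ - (a • f i + b • f i) := by rw [this]
      _ = a • y₁ - a • f i + (b • y₂ - b • f i) := by abel
  have hdisj : Disjoint S C := by
    rw [Set.disjoint_left]
    rintro w hwS ⟨y, hy, rfl⟩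
    obtain ⟨hw1, hw2⟩ := hwS
    refine hgood ⟨y, hy, ?_, fun i => ?_⟩
    · simpa [mem_ball_zero_iff] using hw1
    · have := hw2 i (Set.mem_univ i)
      simpa [mem_ball_zero_iff] using this
  obtain ⟨φ, u, hu1, hu2⟩ := geometric_hahn_banach_open hSconv hSopen hCconv hdisj
  -- u > 0
  have h0S : (0 : X × (ι → X)) ∈ S := by
    constructor
    · simpa [mem_ball_zero_iff] using by linarith
    · intro i _
      show (0 : ι → X) i ∈ ball (0 : X) (r + ε)
      simpa [mem_ball_zero_iff] using by linarith
  have hu_pos : 0 < u := by simpa using hu1 0 h0S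
  -- the component functionals
  set g0 : X →L[ℝ] ℝ := φ.comp (ContinuousLinearMap.inl ℝ X (ι → X)) with hg0_def
  have single_cont : ∀ i : ι, Continuous fun x : X => (Pi.single i x : ι → X) :=
    fun i => continuous_single (A := fun _ : ι => X) i
  set J : ι → (X →L[ℝ] (ι → X)) := fun i =>
    { toLinearMap := LinearMap.single ℝ (fun _ : ι => X) i
      cont := single_cont i } with hJ_def
  set g : ι → (X →L[ℝ] ℝ) := fun i => φ.comp ((ContinuousLinearMap.inr ℝ X (ι → X)).comp (J i))
    with hg_def
  have hJapp : ∀ i x, J i x = Pi.single i x := fun i x => rfl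
  -- decomposition of φ
  have hg0app : ∀ z : X, g0 z = φ (z, 0) := by
    intro z
    rw [hg0_def]
    rw [ContinuousLinearMap.comp_apply, ContinuousLinearMap.inl_apply]
  have hgapp : ∀ (i : ι) (z : X), g i z = φ (0, Pi.single i z) := by
    intro i z
    show φ ((ContinuousLinearMap.inr ℝ X (ι → X)) (J i z)) = _
    rw [ContinuousLinearMap.inr_apply, hJapp]
  have hdecomp : ∀ (x : X) (v : ι → X), φ (x, v) = g0 x + ∑ i, g i (v i) := by
    intro x v
    have h1 : (x, v) = ((x, 0) : X × (ι → X)) + ((0, v) : X × (ι → X)) := by simp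
    have h2 : (∑ i, (((0 : X), Pi.single i (v i)) : X × (ι → X))) = ((0 : X), v) := by
      refine Prod.ext ?_ ?_
      · rw [Prod.fst_sum]
        simp
      · rw [Prod.snd_sum]
        exact Finset.univ_sum_single v
    have h3 : ∀ i, φ ((0 : X), Pi.single i (v i)) = g i (v i) := fun i => (hgapp i (v i)).symm
    rw [h1, map_add, ← h2, map_sum, hg0app]
    rw [Finset.sum_congr rfl fun i _ => h3 i]
  -- G vanishes on Y
  set G : X →L[ℝ] ℝ := g0 + ∑ i, g i with hG_def
  have hGapp : ∀ x, G x = g0 x + ∑ i, g i x := by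
    intro x
    simp [hG_def, ContinuousLinearMap.sum_apply]
  have hClower : ∀ y ∈ (Y : Set X), u ≤ G y - ∑ i, g i (f i) := by
    intro y hy
    have := hu2 _ ⟨y, hy, rfl⟩
    rw [hdecomp] at this
    have hsum : ∑ i, g i (y - f i) = ∑ i, g i y - ∑ i, g i (f i) := by
      rw [← Finset.sum_sub_distrib]
      exact Finset.sum_congr rfl fun i _ => by rw [map_sub]
    rw [hsum] at this
    rw [hGapp]
    linarith
  have hGY : ∀ y ∈ Y, G y = 0 := by
    intro y hy
    by_contra hne
    have hmem : ∀ t : ℝ, (t • y) ∈ (Y : Set X) := fun t => Y.smul_mem t hy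
    have hbd : ∀ t : ℝ, u + ∑ i, g i (f i) ≤ t * G y := by
      intro t
      have := hClower (t • y) (hmem t)
      rw [map_smul] at this
      simp only [smul_eq_mul] at this
      linarith
    rcases lt_or_gt_of_ne hne with hneg | hpos
    · have := hbd ((u + ∑ i, g i (f i) - 1) / G y)
      rw [div_mul_cancel₀ _ (ne_of_lt hneg)] at this
      linarith
    · have := hbd ((u + ∑ i, g i (f i) - 1) / G y)
      rw [div_mul_cancel₀ _ (ne_of_gt hpos)] at this
      linarith
  -- Φ kills G
  have hΦG : Φ G = 0 := hΦY G hGY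
  -- upper bound from the ball side
  have hball : ∀ (x : X), ‖x‖ ≤ 1 → ∀ (v : ι → X), (∀ i, ‖v i‖ ≤ 1) →
      (1 + ε) * g0 x + (r + ε) * ∑ i, g i (v i) ≤ u := by
    intro x hx v hv
    set s : ℝ := (1 + ε) * g0 x + (r + ε) * ∑ i, g i (v i) with hs_def
    have hts : ∀ t : ℝ, 0 < t → t < 1 → t * s < u := by
      intro t ht0 ht1
      have hmem : (((t * (1 + ε)) • x, fun i => (t * (r + ε)) • v i) : X × (ι → X)) ∈ S := by
        constructor
        · rw [mem_ball_zero_iff, norm_smul]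
          have h1 : ‖t * (1 + ε)‖ = t * (1 + ε) := by
            rw [Real.norm_eq_abs, abs_of_pos (by positivity)]
          rw [h1]
          calc t * (1 + ε) * ‖x‖ ≤ t * (1 + ε) * 1 := by
                apply mul_le_mul_of_nonneg_left hx (by positivity)
            _ < 1 + ε := by nlinarith
        · intro i _
          show (t * (r + ε)) • v i ∈ ball (0 : X) (r + ε)
          rw [mem_ball_zero_iff, norm_smul]
          have h1 : ‖t * (r + ε)‖ = t * (r + ε) := by
            rw [Real.norm_eq_abs, abs_of_pos (by positivity)]
          rw [h1]
          calc t * (r + ε) * ‖v i‖ ≤ t * (r + ε) * 1 := by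
                apply mul_le_mul_of_nonneg_left (hv i) (by positivity)
            _ < r + ε := by nlinarith
      have := hu1 _ hmem
      rw [hdecomp] at this
      rw [g0.map_smul, smul_eq_mul] at this
      have hsum : ∑ i, g i ((t * (r + ε)) • v i) = (t * (r + ε)) * ∑ i, g i (v i) := by
        rw [Finset.mul_sum]
        refine Finset.sum_congr rfl fun i _ => ?_
        rw [(g i).map_smul, smul_eq_mul]
      rw [hsum] at this
      calc t * s = t * (1 + ε) * g0 x + t * (r + ε) * ∑ i, g i (v i) := by ring
        _ < u := this
    by_contra hlt
    push_neg at hlt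
    have hs_pos : 0 < s := lt_trans hu_pos hlt
    have h01 : u / s < 1 := (div_lt_one hs_pos).2 hlt
    have h00 : 0 < u / s := div_pos hu_pos hs_pos
    set t : ℝ := (u / s + 1) / 2 with ht_def
    have ht0 : 0 < t := by rw [ht_def]; linarith
    have ht1 : t < 1 := by rw [ht_def]; linarith
    have hts' := hts t ht0 ht1
    have hcontra : u < t * s := by
      have heq : u = (u / s) * s := by field_simp
      rw [heq, ht_def]
      exact mul_lt_mul_of_pos_right (by linarith) hs_pos
    linarith
  -- norm estimate from the ball side
  have hnear : ∀ (h : X →L[ℝ] ℝ) (δ : ℝ), 0 < δ → ∃ x : X, ‖x‖ ≤ 1 ∧ ‖h‖ - δ < h x := by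
    intro h δ hδ
    by_cases hc : ‖h‖ - δ < 0
    · exact ⟨0, by simp, by simpa using hc⟩
    · push_neg at hc
      have hlt : ‖h‖ - δ < ‖h‖ := by linarith
      obtain ⟨x, hx1, hx2⟩ := h.exists_lt_apply_of_lt_opNorm hlt
      rcases le_or_gt 0 (h x) with hpos | hneg
      · exact ⟨x, hx1.le, by rwa [Real.norm_eq_abs, abs_of_nonneg hpos] at hx2⟩
      · refine ⟨-x, by simpa using hx1.le, ?_⟩
        rw [map_neg]
        rwa [Real.norm_eq_abs, abs_of_neg hneg] at hx2
  have hnormbd : (1 + ε) * ‖g0‖ + (r + ε) * ∑ i, ‖g i‖ ≤ u := by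
    refine le_of_forall_pos_le_add fun δ hδ => ?_
    set m : ℝ := (1 + ε) + (r + ε) * (Fintype.card ι) + 1 with hm_def
    have hm_pos : 0 < m := by positivity
    obtain ⟨x, hx1, hx2⟩ := hnear g0 (δ / m) (by positivity)
    choose v hv1 hv2 using fun i => hnear (g i) (δ / m) (by positivity)
    have hb := hball x hx1 v hv1
    have hsum_le : ∑ i, (‖g i‖ - δ / m) ≤ ∑ i, g i (v i) :=
      Finset.sum_le_sum fun i _ => (hv2 i).le
    have hcard : ∑ i, (‖g i‖ - δ / m) = (∑ i, ‖g i‖) - (Fintype.card ι) * (δ / m) := by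
      rw [Finset.sum_sub_distrib]
      simp [Finset.card_univ, mul_comm]
    have h1 : (1 + ε) * (‖g0‖ - δ / m) ≤ (1 + ε) * g0 x :=
      mul_le_mul_of_nonneg_left hx2.le (by positivity)
    have h2 : (r + ε) * ((∑ i, ‖g i‖) - (Fintype.card ι) * (δ / m)) ≤
        (r + ε) * ∑ i, g i (v i) := by
      apply mul_le_mul_of_nonneg_left _ (by positivity)
      rw [← hcard]
      exact hsum_le
    have hδm : ((1 + ε) + (r + ε) * (Fintype.card ι)) * (δ / m) ≤ δ := by
      rw [div_eq_inv_mul, ← mul_assoc]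
      have : ((1 + ε) + (r + ε) * (Fintype.card ι)) * m⁻¹ ≤ 1 := by
        rw [mul_inv_le_iff₀ hm_pos, one_mul, hm_def]
        linarith
      nlinarith
    nlinarith [hb]
  -- lower bound from Φ
  have hfrom_phi : u ≤ ‖g0‖ + r * ∑ i, ‖g i‖ := by
    have h0Y := hClower 0 (Y.zero_mem)
    rw [map_zero] at h0Y
    -- u ≤ -∑ g i (f i)
    have hGsum : Φ g0 + ∑ i, Φ (g i) = 0 := by
      have : Φ G = Φ g0 + ∑ i, Φ (g i) := by
        rw [hG_def, map_add, map_sum]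
      rw [← this, hΦG]
    have key : u ≤ Φ g0 + ∑ i, (Φ (g i) - g i (f i)) := by
      have : Φ g0 + ∑ i, (Φ (g i) - g i (f i)) = -∑ i, g i (f i) := by
        rw [Finset.sum_sub_distrib]
        linarith [hGsum]
      rw [this]
      linarith
    have hg0bd : Φ g0 ≤ ‖g0‖ := by
      calc Φ g0 ≤ |Φ g0| := le_abs_self _
        _ = ‖Φ g0‖ := (Real.norm_eq_abs _).symm
        _ ≤ ‖Φ‖ * ‖g0‖ := Φ.le_opNorm g0
        _ ≤ 1 * ‖g0‖ := mul_le_mul_of_nonneg_right hΦ (norm_nonneg _)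
        _ = ‖g0‖ := one_mul _
    have hgibd : ∀ i, Φ (g i) - g i (f i) ≤ r * ‖g i‖ := by
      intro i
      have happ : (Φ - inclusionInDoubleDual ℝ X (f i)) (g i) = Φ (g i) - g i (f i) := by
        rw [ContinuousLinearMap.sub_apply, dual_def]
      calc Φ (g i) - g i (f i) = (Φ - inclusionInDoubleDual ℝ X (f i)) (g i) := happ.symm
        _ ≤ |(Φ - inclusionInDoubleDual ℝ X (f i)) (g i)| := le_abs_self _
        _ = ‖(Φ - inclusionInDoubleDual ℝ X (f i)) (g i)‖ := (Real.norm_eq_abs _).symm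
        _ ≤ ‖Φ - inclusionInDoubleDual ℝ X (f i)‖ * ‖g i‖ :=
            (Φ - inclusionInDoubleDual ℝ X (f i)).le_opNorm (g i)
        _ ≤ r * ‖g i‖ := mul_le_mul_of_nonneg_right (hd i) (norm_nonneg _)
    calc u ≤ Φ g0 + ∑ i, (Φ (g i) - g i (f i)) := key
      _ ≤ ‖g0‖ + ∑ i, r * ‖g i‖ := by
          apply add_le_add hg0bd
          exact Finset.sum_le_sum fun i _ => hgibd i
      _ = ‖g0‖ + r * ∑ i, ‖g i‖ := by rw [Finset.mul_sum]
  -- contradiction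
  have ha : (0 : ℝ) ≤ ‖g0‖ := norm_nonneg _
  have hb : (0 : ℝ) ≤ ∑ i, ‖g i‖ := Finset.sum_nonneg fun i _ => norm_nonneg _
  have hx1 : (1 + ε) * ‖g0‖ = ‖g0‖ + ε * ‖g0‖ := by ring
  have hx2 : (r + ε) * ∑ i, ‖g i‖ = r * ∑ i, ‖g i‖ + ε * ∑ i, ‖g i‖ := by ring
  rw [hx1, hx2] at hnormbd
  have h6 : 0 ≤ ε * ‖g0‖ := mul_nonneg hε.le ha
  have h7 : 0 ≤ ε * ∑ i, ‖g i‖ := mul_nonneg hε.le hb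
  have h8 : ε * ‖g0‖ = 0 := le_antisymm (by linarith) h6
  have h9 : ε * ∑ i, ‖g i‖ = 0 := le_antisymm (by linarith) h7
  have ha0 : ‖g0‖ = 0 := by
    rcases mul_eq_zero.1 h8 with h | h
    · exact absurd h (ne_of_gt hε)
    · exact h
  have hb0 : ∑ i, ‖g i‖ = 0 := by
    rcases mul_eq_zero.1 h9 with h | h
    · exact absurd h (ne_of_gt hε)
    · exact h
  rw [ha0, hb0] at hfrom_phi
  simp at hfrom_phi
  linarith

open NormedSpace in
/-- for compact `F ⊆ X`, `rad_{B_{Y⊥⊥}}(F) = rad_{B_Y}(F)`. -/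
theorem stmt_9 {X : Type*} [NormedAddCommGroup X] [NormedSpace ℝ X] [CompleteSpace X]
    (Y : Submodule ℝ X) (hYc : IsClosed (Y : Set X))
    (F : Set X) (hFne : F.Nonempty) (hFcp : IsCompact F) :
    chebRad (biann Y ∩ closedBall 0 1) (inclusionInDoubleDual ℝ X '' F)
      = chebRad ((Y : Set X) ∩ closedBall 0 1) F := by
  classical
  set ι' := inclusionInDoubleDual ℝ X with hι'
  have hiso : ∀ x : X, ‖ι' x‖ = ‖x‖ := fun x =>
    (inclusionInDoubleDualLi ℝ (E := X)).norm_map x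
  have hιsub : ∀ x y : X, ‖ι' x - ι' y‖ = ‖x - y‖ := by
    intro x y
    rw [← map_sub, hiso]
  -- the image of `F` and norms bounds
  obtain ⟨M, hM⟩ := hFcp.isBounded.exists_norm_le
  have hMim : ∀ b ∈ ι' '' F, ‖b‖ ≤ M := by
    rintro _ ⟨x, hx, rfl⟩
    rw [hiso]
    exact hM x hx
  have h0bi : (0 : StrongDual ℝ (StrongDual ℝ X)) ∈ biann Y ∩ closedBall 0 1 := by
    constructor
    · intro f _
      rfl
    · simp
  haveI hne_bi : Nonempty ↥(biann Y ∩ closedBall 0 1) := ⟨⟨0, h0bi⟩⟩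
  have hFne' : (ι' '' F).Nonempty := hFne.image _
  -- image chebR identity
  have hchebR_im : ∀ v : X, chebR (ι' v) (ι' '' F) = chebR v F := by
    intro v
    unfold chebR
    rw [← sSup_range, ← sSup_range]
    congr 1
    ext t
    constructor
    · rintro ⟨⟨_, x, hx, rfl⟩, rfl⟩
      exact ⟨⟨x, hx⟩, by show ‖v - x‖ = ‖ι' v - ι' x‖; rw [hιsub]⟩
    · rintro ⟨⟨x, hx⟩, rfl⟩
      exact ⟨⟨ι' x, ⟨x, hx, rfl⟩⟩, by show ‖ι' v - ι' x‖ = ‖v - x‖; rw [hιsub]⟩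
  apply le_antisymm
  · -- easy direction
    have : ∀ v : ↥((Y : Set X) ∩ closedBall 0 1),
        chebRad (biann Y ∩ closedBall 0 1) (ι' '' F) ≤ chebR (v : X) F := by
      rintro ⟨v, hvY, hvB⟩
      have hmem : ι' v ∈ biann Y ∩ closedBall 0 1 := by
        constructor
        · intro f hf
          rw [hι', dual_def]
          exact hf v hvY
        · rw [mem_closedBall_zero_iff (E := StrongDual ℝ (StrongDual ℝ X)), hiso]
          exact mem_closedBall_zero_iff.1 hvB
      calc chebRad (biann Y ∩ closedBall 0 1) (ι' '' F) ≤ chebR (ι' v) (ι' '' F) :=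
            chebRad_le hmem
        _ = chebR v F := hchebR_im v
    haveI hne2 : Nonempty ↥((Y : Set X) ∩ closedBall 0 1) :=
      ⟨⟨0, Y.zero_mem, by simp⟩⟩
    unfold chebRad
    exact le_ciInf this
  · -- hard direction
    have main : ∀ ε : ℝ, 0 < ε →
        chebRad ((Y : Set X) ∩ closedBall 0 1) F
          ≤ chebRad (biann Y ∩ closedBall 0 1) (ι' '' F) + 4 * ε := by
      intro ε hε
      set r0 := chebRad (biann Y ∩ closedBall 0 1) (ι' '' F) with hr0
      have hr0nn : 0 ≤ r0 := chebRad_nonneg ⟨0, h0bi⟩ _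
      -- choose an almost optimal Φ
      have hlt : chebRad (biann Y ∩ closedBall 0 1) (ι' '' F) < r0 + ε := by
        rw [← hr0]; linarith
      obtain ⟨⟨Φ, hΦbi, hΦball⟩, hΦlt⟩ := exists_lt_of_ciInf_lt hlt
      have hΦnorm : ‖Φ‖ ≤ 1 := (mem_closedBall_zero_iff (E := StrongDual ℝ (StrongDual ℝ X))).1 hΦball
      -- finite ε-net
      have hcover : F ⊆ ⋃ x ∈ F, ball x ε := fun x hx =>
        Set.mem_biUnion hx (mem_ball_self hε)
      obtain ⟨s, hsF, hsfin, hscov⟩ :=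
        hFcp.elim_finite_subcover_image (fun x _ => isOpen_ball) hcover
      haveI := hsfin.fintype
      set fnet : ↥s → X := Subtype.val with hfnet
      have hd : ∀ i : ↥s, ‖Φ - ι' (fnet i)‖ ≤ r0 + ε := by
        intro i
        have hmem : ι' (fnet i) ∈ ι' '' F := ⟨fnet i, hsF i.2, rfl⟩
        have := le_chebR (bddAbove_chebR Φ hMim) hmem
        exact le_trans this hΦlt.le
      obtain ⟨y, hyY, hynorm, hyd⟩ := key_lemma Y fnet Φ hΦbi hΦnorm hε
        (by linarith) hd
      -- rescale
      set y' := (1 + ε)⁻¹ • y with hy'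
      have hy'Y : y' ∈ Y := Y.smul_mem _ hyY
      have h1ε : (0 : ℝ) < 1 + ε := by linarith
      have hy'norm : ‖y'‖ ≤ 1 := by
        rw [hy', norm_smul, Real.norm_eq_abs, abs_of_pos (inv_pos.2 h1ε)]
        rw [inv_mul_le_iff₀ h1ε]
        linarith
      have hy'y : ‖y' - y‖ ≤ ε := by
        have : y' - y = ((1 + ε)⁻¹ - 1) • y := by
          rw [sub_smul, one_smul, hy']
        rw [this, norm_smul, Real.norm_eq_abs]
        have habs : |(1 + ε)⁻¹ - 1| = 1 - (1 + ε)⁻¹ := by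
          rw [abs_of_nonpos]
          · ring
          · have : (1 + ε)⁻¹ ≤ 1 := by
              rw [inv_le_one_iff₀]; right; linarith
            linarith
        rw [habs]
        have h2 : 1 - (1 + ε)⁻¹ = ε / (1 + ε) := by
          field_simp
          ring
        rw [h2]
        calc ε / (1 + ε) * ‖y‖ ≤ ε / (1 + ε) * (1 + ε) := by
              apply mul_le_mul_of_nonneg_left hynorm (by positivity)
          _ = ε := by field_simp
      -- chebR bound for y'
      have hcheby' : chebR y' F ≤ r0 + 4 * ε := by
        apply chebR_le hFne
        intro b hb
        obtain ⟨x, hxs, hxb⟩ : ∃ x ∈ s, b ∈ ball x ε := by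
          have := hscov hb
          simpa using this
        have hxd : ‖y - x‖ ≤ r0 + ε + ε := hyd ⟨x, hxs⟩
        have hbx : ‖x - b‖ < ε := by
          rw [← dist_eq_norm, dist_comm]
          exact hxb
        calc ‖y' - b‖ = ‖(y' - y) + (y - x) + (x - b)‖ := by congr 1; abel
          _ ≤ ‖(y' - y) + (y - x)‖ + ‖x - b‖ := norm_add_le _ _
          _ ≤ ‖y' - y‖ + ‖y - x‖ + ‖x - b‖ := by
              linarith [norm_add_le (y' - y) (y - x)]
          _ ≤ ε + (r0 + ε + ε) + ε := by linarith
          _ = r0 + 4 * ε := by ring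
      calc chebRad ((Y : Set X) ∩ closedBall 0 1) F ≤ chebR y' F :=
            chebRad_le ⟨hy'Y, mem_closedBall_zero_iff.2 hy'norm⟩
        _ ≤ r0 + 4 * ε := hcheby'
    refine le_of_forall_pos_le_add fun δ hδ => ?_
    have := main (δ / 4) (by positivity)
    linarith
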